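/- Let G be a finite simple connected graph on vertex set V, let T be a spanning tree of G rooted at a vertex r, and let k ≥ 1 be an integer. Let U denote the set of vertices of depth at most k−1 in T, and assume that for every subtree τ of T rooted at a vertex of depth k, every edge of G with exactly one endpoint in τ joins two vertices comparable in T. Then the connected components of the induced subgraph G[V∖U] are exactly the vertex sets of the subtrees of T rooted at the vertices of depth k; in particular, each such subtree is a spanning tree of the corresponding component. -/

import Mathlib

namespace StreamDFS

/-- `u` is an ancestor of `v` in the tree `T` rooted at `r`:
`u` lies on (every) path in `T` from `r` to `v`. -/
def IsAncestor {V : Type*} (T : SimpleGraph V) (r u v : V) : Prop :=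
  ∀ p : T.Walk r v, p.IsPath → u ∈ p.support

/-- `u` and `v` are comparable in the tree `T` rooted at `r`:
one is an ancestor of the other. -/
def Cmp {V : Type*} (T : SimpleGraph V) (r u v : V) : Prop :=
  IsAncestor T r u v ∨ IsAncestor T r v u

/-- The depth (level) of `v` in the tree `T` rooted at `r`. -/
noncomputable def depth {V : Type*} (T : SimpleGraph V) (r v : V) : ℕ := T.dist r v

/-- The top `k` levels of the tree `T` rooted at `r`: vertices of depth at most `k-1`. -/
noncomputable def topLevels {V : Type*} (T : SimpleGraph V) (r : V) (k : ℕ) : Set V :=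
  {v | depth T r v ≤ k - 1}

section Lemmas

open SimpleGraph

variable {V : Type*} [DecidableEq V] {T : SimpleGraph V} (hT : T.IsTree)

include hT

lemma path_eq {a b : V} (p q : T.Walk a b) (hp : p.IsPath) (hq : q.IsPath) : p = q :=
  (hT.existsUnique_path a b).unique hp hq

lemma path_length {a b : V} (p : T.Walk a b) (hp : p.IsPath) : p.length = T.dist a b := by
  obtain ⟨w, hw⟩ := hT.isConnected.exists_walk_length_eq_dist a b
  have h1 : p = w.bypass := path_eq hT p w.bypass hp w.bypass_isPath
  refine le_antisymm ?_ (SimpleGraph.dist_le p)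
  calc p.length = w.bypass.length := by rw [h1]
    _ ≤ w.length := w.length_bypass_le
    _ = T.dist a b := hw

lemma dist_split {a b u : V} (p : T.Walk a b) (hp : p.IsPath) (h : u ∈ p.support) :
    T.dist a b = T.dist a u + T.dist u b := by
  have hA := path_length hT (p.takeUntil u h) (hp.takeUntil h)
  have hB := path_length hT (p.dropUntil u h) (hp.dropUntil h)
  have hs := congrArg SimpleGraph.Walk.length (p.take_spec h)
  rw [SimpleGraph.Walk.length_append] at hs
  rw [← path_length hT p hp, ← hs, hA, hB]

lemma anc_of_mem {r v x : V} (p : T.Walk r v) (hp : p.IsPath) (hx : x ∈ p.support) :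
    IsAncestor T r x v := fun q hq => by rw [path_eq hT q p hq hp]; exact hx

lemma anc_self (r x : V) : IsAncestor T r x x := fun p _ => p.end_mem_support

lemma anc_trans {r x w v : V} (h1 : IsAncestor T r x w) (h2 : IsAncestor T r w v) :
    IsAncestor T r x v := fun p hp => by
  have hw : w ∈ p.support := h2 p hp
  exact SimpleGraph.Walk.support_takeUntil_subset p hw (h1 (p.takeUntil w hw) (hp.takeUntil hw))

lemma exists_path (a b : V) : ∃ p : T.Walk a b, p.IsPath := (hT.existsUnique_path a b).exists

lemma anc_dist {r x v : V} (h : IsAncestor T r x v) :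
    T.dist r v = T.dist r x + T.dist x v := by
  obtain ⟨p, hp⟩ := exists_path hT r v
  exact dist_split hT p hp (h p hp)

lemma between {r u x w : V} (p : T.Walk r u) (hp : p.IsPath) (hx : x ∈ p.support)
    (hw : w ∈ (p.dropUntil x hx).support) : IsAncestor T r x w := by
  by_cases hwx : w = x
  · subst hwx; exact anc_self hT r w
  set A := p.takeUntil x hx with hA
  set B := p.dropUntil x hx with hB
  have hBpath : B.IsPath := hp.dropUntil hx
  set C := B.takeUntil w hw with hC
  have hCpath : C.IsPath := hBpath.takeUntil hw
  have hm : (A.append C).IsPath := by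
    rw [SimpleGraph.Walk.isPath_def, SimpleGraph.Walk.support_append, List.nodup_append]
    have hpnodup : (A.support ++ B.support.tail).Nodup := by
      rw [← SimpleGraph.Walk.support_append, p.take_spec hx]
      exact hp.support_nodup
    rw [List.nodup_append] at hpnodup
    have hCB : C.support.tail ⊆ B.support.tail := by
      intro t ht
      have htC : t ∈ C.support := List.mem_of_mem_tail ht
      have htx : t ≠ x := by
        intro h; subst h
        have := hCpath.support_nodup
        rw [C.support_eq_cons] at this
        exact (List.nodup_cons.mp this).1 ht
      have htB : t ∈ B.support := SimpleGraph.Walk.support_takeUntil_subset B hw htC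
      rw [B.support_eq_cons] at htB
      exact (List.mem_cons.mp htB).resolve_left htx
    exact ⟨hpnodup.1, hCpath.support_nodup.sublist (List.tail_sublist _),
      fun t htA s htC => hpnodup.2.2 t htA s (hCB htC)⟩
  have hxm : x ∈ (A.append C).support := by
    rw [SimpleGraph.Walk.mem_support_append_iff]; exact Or.inl A.end_mem_support
  exact anc_of_mem hT (A.append C) hm hxm

lemma deep_unique {r v x x' : V} {k : ℕ} (hx : T.dist r x = k) (hx' : T.dist r x' = k)
    (ha : IsAncestor T r x v) (ha' : IsAncestor T r x' v) : x = x' := by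
  obtain ⟨p, hp⟩ := exists_path hT r v
  have hmx : x ∈ p.support := ha p hp
  have hmx' : x' ∈ p.support := ha' p hp
  have hsplit : x' ∈ (p.takeUntil x hmx).support ++ (p.dropUntil x hmx).support.tail := by
    rw [← SimpleGraph.Walk.support_append, p.take_spec hmx]; exact hmx'
  rcases List.mem_append.mp hsplit with h | h
  · have := dist_split hT (p.takeUntil x hmx) (hp.takeUntil hmx) h
    have h0 : T.dist x' x = 0 := by omega
    exact ((hT.isConnected.dist_eq_zero_iff).mp h0).symm
  · have hB := dist_split hT (p.dropUntil x hmx) (hp.dropUntil hmx) (List.mem_of_mem_tail h)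
    have h1 := dist_split hT p hp hmx
    have h2 := dist_split hT p hp hmx'
    have h0 : T.dist x x' = 0 := by omega
    exact (hT.isConnected.dist_eq_zero_iff).mp h0

lemma exists_deep {r : V} {k : ℕ} : ∀ n (v : V), T.dist r v = n → k ≤ n →
    ∃ x, T.dist r x = k ∧ IsAncestor T r x v := by
  intro n
  induction n using Nat.strong_induction_on with
  | _ n ih =>
    intro v hd hkn
    rcases eq_or_lt_of_le hkn with heq | hlt
    · exact ⟨v, by omega, anc_self hT r v⟩
    · obtain ⟨p, hp⟩ := exists_path hT r v
      have hvr : v ≠ r := by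
        intro h; subst h
        rw [SimpleGraph.dist_self] at hd; omega
      have hnotnil : ¬ p.reverse.Nil := by
        rw [SimpleGraph.Walk.not_nil_iff_lt_length, SimpleGraph.Walk.length_reverse,
          path_length hT p hp]
        omega
      obtain ⟨c, hadj, q, hq⟩ := SimpleGraph.Walk.not_nil_iff.mp hnotnil
      have hcp : c ∈ p.support := by
        have : c ∈ p.reverse.support := by rw [hq]; simp
        rwa [SimpleGraph.Walk.support_reverse, List.mem_reverse] at this
      have hcv : c ≠ v := by
        have hrp : p.reverse.IsPath := hp.reverse
        rw [hq] at hrp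
        intro h; subst h
        exact ((SimpleGraph.Walk.cons_isPath_iff _ _).mp hrp).2 q.start_mem_support
      have hd1 : T.dist c v = 1 := by
        have hle : T.dist c v ≤ 1 := by
          simpa using SimpleGraph.dist_le hadj.symm.toWalk
        have hne : T.dist c v ≠ 0 := fun h =>
          hcv ((hT.isConnected.dist_eq_zero_iff).mp h)
        omega
      have hsp := dist_split hT p hp hcp
      have hdc : T.dist r c = n - 1 := by omega
      obtain ⟨x, hxk, hxc⟩ := ih (n-1) (by omega) c hdc (by omega)
      exact ⟨x, hxk, anc_trans hT hxc (anc_of_mem hT p hp hcp)⟩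

end Lemmas

lemma reach_induce {V : Type*} {T G' : SimpleGraph V} (hle : T ≤ G') {S : Set V} :
    ∀ {a b : V} (p : T.Walk a b), (∀ w ∈ p.support, w ∈ S) → ∀ (ha : a ∈ S) (hb : b ∈ S),
      (G'.induce S).Reachable ⟨a, ha⟩ ⟨b, hb⟩ := by
  intro a b p
  induction p with
  | nil => intro _ ha hb; rfl
  | @cons a c b hadj q ih =>
    intro h ha hb
    have hc : c ∈ S := h c (by simp)
    have hstep : (G'.induce S).Adj ⟨a, ha⟩ ⟨c, hc⟩ := hle hadj
    exact hstep.reachable.trans (ih (fun w hw => h w (by simp [hw])) hc hb)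


/-- The 'additional property' of the special spanning tree (Section 5).  If `T` is a
spanning tree of the connected graph `G` rooted at `r`, `U` its top `k` levels, and
every edge of `G` with exactly one endpoint in a subtree rooted at a depth-`k` vertex
joins comparable vertices (invariant `I_{T2}`), then the connected components of
`G[V∖U]` are exactly the vertex sets of the subtrees of `T` rooted at depth-`k`
vertices; each such subtree is a spanning tree of its component. -/
theorem subtrees_are_components {V : Type*} [Fintype V]
    (G T : SimpleGraph V) (r : V) (k : ℕ) (hk : 1 ≤ k)
    (hG : G.Connected) (hTG : T ≤ G) (hTree : T.IsTree)
    (hIT2 : ∀ x, depth T r x = k → ∀ u v, G.Adj u v →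
      IsAncestor T r x u → ¬ IsAncestor T r x v → Cmp T r u v) :
    (∀ u v (hu : u ∉ topLevels T r k) (hv : v ∉ topLevels T r k),
      (G.induce (topLevels T r k)ᶜ).Reachable ⟨u, hu⟩ ⟨v, hv⟩ ↔
        ∃ x, depth T r x = k ∧ IsAncestor T r x u ∧ IsAncestor T r x v)
    ∧ (∀ x, depth T r x = k →
        (∀ v, IsAncestor T r x v → v ∉ topLevels T r k) ∧
        (T.induce {v | IsAncestor T r x v}).Connected) := by
  classical
  have hTc := hTree.isConnected
  have hnot : ∀ v, v ∉ topLevels T r k ↔ k ≤ T.dist r v := by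
    intro v
    simp only [topLevels, depth, Set.mem_setOf_eq, not_le]
    omega
  -- Part 2a
  have part2a : ∀ x, T.dist r x = k → ∀ v, IsAncestor T r x v → v ∉ topLevels T r k := by
    intro x hxk v hv
    have := anc_dist hTree hv
    rw [hnot]
    omega
  -- edge lemma
  have edge : ∀ u v, k ≤ T.dist r u → k ≤ T.dist r v → G.Adj u v → ∀ x, T.dist r x = k →
      IsAncestor T r x u → IsAncestor T r x v := by
    intro u v hu hv hadj x hxk hxu
    by_cases hxv : IsAncestor T r x v
    · exact hxv
    rcases hIT2 x hxk u v hadj hxu hxv with huv | hvu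
    · exact anc_trans hTree hxu huv
    · obtain ⟨p, hp⟩ := exists_path hTree r u
      have hmx := hxu p hp
      have hmv := hvu p hp
      have hsp : v ∈ (p.takeUntil x hmx).support ++ (p.dropUntil x hmx).support.tail := by
        rw [← SimpleGraph.Walk.support_append, p.take_spec hmx]; exact hmv
      rcases List.mem_append.mp hsp with hcase | hcase
      · have hvx : IsAncestor T r v x :=
          anc_of_mem hTree (p.takeUntil x hmx) (hp.takeUntil hmx) hcase
        have hd := anc_dist hTree hvx
        have hdu := anc_dist hTree hvu
        have h0 : T.dist v x = 0 := by omega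
        have hveq : v = x := hTc.dist_eq_zero_iff.mp h0
        subst hveq
        exact anc_self hTree r v
      · exact between hTree p hp hmx (List.mem_of_mem_tail hcase)
  refine ⟨?_, ?_⟩
  · intro u v hu hv
    constructor
    · intro hreach
      obtain ⟨w⟩ := hreach
      have main : ∀ (a b : ↥(topLevels T r k)ᶜ) (w : (G.induce (topLevels T r k)ᶜ).Walk a b),
          ∃ x, T.dist r x = k ∧ IsAncestor T r x a.1 ∧ IsAncestor T r x b.1 := by
        intro a b w
        induction w with
        | nil =>
          rename_i a0
          obtain ⟨x, hxk, hxa⟩ :=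
            exists_deep hTree (T.dist r a0.1) a0.1 rfl ((hnot _).mp a0.2)
          exact ⟨x, hxk, hxa, hxa⟩
        | @cons a c b hadj q ih =>
          obtain ⟨x, hxk, hxc, hxb⟩ := ih
          obtain ⟨x', hx'k, hx'a⟩ :=
            exists_deep hTree (T.dist r _) _ rfl ((hnot _).mp a.2)
          have hadj' : G.Adj a.1 c.1 := hadj
          have hx'c : IsAncestor T r x' c.1 :=
            edge a.1 c.1 ((hnot _).mp a.2) ((hnot _).mp c.2) hadj' x' hx'k hx'a
          have hxx : x' = x := deep_unique hTree hx'k hxk hx'c hxc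
          exact ⟨x, hxk, hxx ▸ hx'a, hxb⟩
      exact main _ _ w
    · rintro ⟨x, hxk, hxu, hxv⟩
      have key : ∀ w (hw : IsAncestor T r x w) (hw' : w ∉ topLevels T r k),
          (G.induce (topLevels T r k)ᶜ).Reachable
            ⟨x, part2a x hxk x (anc_self hTree r x)⟩ ⟨w, hw'⟩ := by
        intro w hw hw'
        obtain ⟨p, hp⟩ := exists_path hTree r w
        have hmx := hw p hp
        exact reach_induce hTG (p.dropUntil x hmx)
          (fun t ht => part2a x hxk t (between hTree p hp hmx ht)) _ _
      exact (key u hxu hu).symm.trans (key v hxv hv)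
  · intro x hxk
    refine ⟨part2a x hxk, ?_⟩
    rw [SimpleGraph.connected_iff]
    refine ⟨?_, ⟨⟨x, anc_self hTree r x⟩⟩⟩
    have key : ∀ (a : {v | IsAncestor T r x v}),
        (T.induce {v | IsAncestor T r x v}).Reachable ⟨x, anc_self hTree r x⟩ a := by
      rintro ⟨v, hv⟩
      obtain ⟨p, hp⟩ := exists_path hTree r v
      have hmx := hv p hp
      exact reach_induce le_rfl (p.dropUntil x hmx)
        (fun t ht => between hTree p hp hmx ht) _ _
    intro a b
    exact (key a).symm.trans (key b)


end StreamDFS
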